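/- arXiv:1402.4846 — 2 statements merged into one kernel-verified Lean document; each statement's English description precedes it below -/
import Mathlib

section
/- Let M ∈ ℤ^{P×R} be a matrix each of whose columns is a permutation of either (−1, −1, +1, 0, …, 0) or (−2, +1, 0, …, 0) (so each column has exactly one entry equal to +1). Suppose there exists e ∈ (0,∞)^P such that e^T M = 0. Then M has a nonzero row all of whose entries are nonnegative (hence equal to 0 or 1). -/
/-- a stoichiometric matrix (columns of type ε_{j₃} − ε_{j₁} − ε_{j₂})
with a positive conservation vector has a nonzero row with nonnegative entries. -/
theorem stmt7 (P R : ℕ) (hR : 0 < R) (M : Matrix (Fin P) (Fin R) ℤ)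
    (hcol : ∀ j : Fin R, ∃ j1 j2 j3 : Fin P, j3 ≠ j1 ∧ j3 ≠ j2 ∧
      ∀ i : Fin P, M i j =
        (if i = j3 then 1 else 0) - (if i = j1 then 1 else 0) - (if i = j2 then 1 else 0))
    (e : Fin P → ℝ) (he : ∀ i, 0 < e i)
    (hcons : ∀ j : Fin R, ∑ i, e i * (M i j : ℝ) = 0) :
    ∃ i : Fin P, (∃ j, M i j ≠ 0) ∧ ∀ j, 0 ≤ M i j := by
  classical
  -- key : for each column, e j3 = e j1 + e j2
  have key : ∀ j : Fin R, ∀ j1 j2 j3 : Fin P,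
      (∀ i : Fin P, M i j =
        (if i = j3 then 1 else 0) - (if i = j1 then 1 else 0) - (if i = j2 then 1 else 0)) →
      e j3 = e j1 + e j2 := by
    intro j j1 j2 j3 hM
    have h := hcons j
    have : ∑ i, e i * (M i j : ℝ)
        = e j3 - e j1 - e j2 := by
      have : ∀ i, e i * (M i j : ℝ)
          = (if i = j3 then e i else 0) - (if i = j1 then e i else 0)
            - (if i = j2 then e i else 0) := by
        intro i
        rw [hM i]
        push_cast
        split_ifs <;> ring
      simp only [this, Finset.sum_sub_distrib, Finset.sum_ite_eq',
        Finset.mem_univ, if_true]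
    rw [this] at h
    linarith
  -- S : set of nonzero rows
  let S : Finset (Fin P) := Finset.univ.filter (fun i => ∃ j, M i j ≠ 0)
  have hSne : S.Nonempty := by
    obtain ⟨j1, j2, j3, h31, h32, hM⟩ := hcol ⟨0, hR⟩
    refine ⟨j3, ?_⟩
    simp only [S, Finset.mem_filter, Finset.mem_univ, true_and]
    refine ⟨⟨0, hR⟩, ?_⟩
    rw [hM j3]
    simp [h31, h32]
  obtain ⟨i0, hi0S, hi0max⟩ := S.exists_max_image e hSne
  refine ⟨i0, ?_, ?_⟩
  · simpa [S, Finset.mem_filter] using hi0S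
  · intro j
    by_contra hneg
    push_neg at hneg
    obtain ⟨j1, j2, j3, h31, h32, hM⟩ := hcol j
    have hMij := hM i0
    -- i0 must be j1 or j2
    have hcase : i0 = j1 ∨ i0 = j2 := by
      by_contra hc
      push_neg at hc
      rw [hMij] at hneg
      simp [hc.1, hc.2] at hneg
      split_ifs at hneg <;> omega
    have hsum := key j j1 j2 j3 hM
    have hj3S : j3 ∈ S := by
      simp only [S, Finset.mem_filter, Finset.mem_univ, true_and]
      refine ⟨j, ?_⟩
      rw [hM j3]
      simp [h31, h32]
    have hle := hi0max j3 hj3S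
    have h1 := he j1
    have h2 := he j2
    rcases hcase with h | h <;> subst h <;> linarith
end

section
/- Suppose M is a P×R stoichiometric matrix in the sorted block form of the permutation lemma, with the first s rows forming the submatrix N₁ with nonpositive entries. Then there exists a constant C > 0 (depending only on the rate constants k_j^f, k_j^b) such that for all c ∈ ℝ₊^P: (a) f_k(c) ≤ C Σ_{i=1}^P c_i for 1 ≤ k ≤ s, and (b) f_k(c) ≤ C (Σ_{i=1}^P c_i + Σ_{i=1}^{k−1} c_i²) for s+1 ≤ k ≤ P. -/
/-- in the sorted block form (no product among the first s species, and
reactant indices strictly below the product index), the reaction terms satisfy the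
linear bound for k ≤ s and the linear-plus-lower-quadratic bound for k > s. -/
theorem stmt10 (P R s : ℕ) (j1 j2 j3 : Fin R → Fin P)
    (kf kb : Fin R → ℝ) (hkf : ∀ j, 0 ≤ kf j) (hkb : ∀ j, 0 ≤ kb j)
    (hs : ∀ j, s ≤ (j3 j : ℕ))
    (hsort : ∀ j, (j1 j : ℕ) < (j3 j : ℕ) ∧ (j2 j : ℕ) < (j3 j : ℕ)) :
    ∃ C > (0 : ℝ), ∀ c : Fin P → ℝ, (∀ l, 0 ≤ c l) → ∀ k : Fin P,
      ((k : ℕ) < s →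
        (∑ j : Fin R,
          (((if k = j3 j then 1 else 0) - (if k = j1 j then 1 else 0)
              - (if k = j2 j then 1 else 0) : ℝ)) *
            (kf j * c (j1 j) * c (j2 j) - kb j * c (j3 j)))
          ≤ C * ∑ i, c i) ∧
      (s ≤ (k : ℕ) →
        (∑ j : Fin R,
          (((if k = j3 j then 1 else 0) - (if k = j1 j then 1 else 0)
              - (if k = j2 j then 1 else 0) : ℝ)) *
            (kf j * c (j1 j) * c (j2 j) - kb j * c (j3 j)))
          ≤ C * (∑ i, c i +
              ∑ i ∈ Finset.univ.filter (fun i : Fin P => (i : ℕ) < (k : ℕ)), c i ^ 2)) := by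
  set C : ℝ := 1 + ∑ j : Fin R, 2 * (kf j + kb j) with hC
  have hsum_nonneg : (0:ℝ) ≤ ∑ j : Fin R, 2 * (kf j + kb j) :=
    Finset.sum_nonneg fun j _ => by nlinarith [hkf j, hkb j]
  have hCpos : 0 < C := by simp only [hC]; linarith
  refine ⟨C, hCpos, ?_⟩
  intro c hc k
  have hS : (0:ℝ) ≤ ∑ i, c i := Finset.sum_nonneg fun i _ => hc i
  have hc3 : ∀ j, c (j3 j) ≤ ∑ i, c i := fun j =>
    Finset.single_le_sum (fun i _ => hc i) (Finset.mem_univ _)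
  constructor
  · intro hks
    have hterm : ∀ j ∈ Finset.univ, (((if k = j3 j then 1 else 0)
        - (if k = j1 j then 1 else 0) - (if k = j2 j then 1 else 0) : ℝ)) *
          (kf j * c (j1 j) * c (j2 j) - kb j * c (j3 j))
        ≤ 2 * (kf j + kb j) * ∑ i, c i := by
      intro j _
      have hkne : k ≠ j3 j := by
        intro h
        have := hs j
        rw [h] at hks
        omega
      set e : ℝ := ((if k = j3 j then 1 else 0)
        - (if k = j1 j then 1 else 0) - (if k = j2 j then 1 else 0) : ℝ) with he
      have heb : e ≤ 0 ∧ -2 ≤ e := by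
        rw [he, if_neg hkne]
        split_ifs <;> norm_num
      have hA : (0:ℝ) ≤ kf j * c (j1 j) * c (j2 j) :=
        mul_nonneg (mul_nonneg (hkf j) (hc _)) (hc _)
      have hB : (0:ℝ) ≤ kb j * c (j3 j) := mul_nonneg (hkb j) (hc _)
      have h4 : kb j * c (j3 j) ≤ kb j * ∑ i, c i :=
        mul_le_mul_of_nonneg_left (hc3 j) (hkb j)
      nlinarith [mul_nonneg (by linarith [heb.1] : (0:ℝ) ≤ -e) hA,
        mul_nonneg (by linarith [heb.2] : (0:ℝ) ≤ e + 2) hB,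
        mul_nonneg (hkf j) hS]
    calc (∑ j : Fin R, (((if k = j3 j then 1 else 0) - (if k = j1 j then 1 else 0)
              - (if k = j2 j then 1 else 0) : ℝ)) *
            (kf j * c (j1 j) * c (j2 j) - kb j * c (j3 j)))
        ≤ ∑ j : Fin R, 2 * (kf j + kb j) * ∑ i, c i := Finset.sum_le_sum hterm
      _ = (∑ j : Fin R, 2 * (kf j + kb j)) * ∑ i, c i := by rw [Finset.sum_mul]
      _ ≤ C * ∑ i, c i := by
          apply mul_le_mul_of_nonneg_right _ hS
          simp only [hC]; linarith
  · intro hsk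
    set Q : ℝ := ∑ i ∈ Finset.univ.filter (fun i : Fin P => (i : ℕ) < (k : ℕ)), c i ^ 2
      with hQdef
    have hQ : (0:ℝ) ≤ Q := Finset.sum_nonneg fun i _ => sq_nonneg _
    have hterm : ∀ j ∈ Finset.univ, (((if k = j3 j then 1 else 0)
        - (if k = j1 j then 1 else 0) - (if k = j2 j then 1 else 0) : ℝ)) *
          (kf j * c (j1 j) * c (j2 j) - kb j * c (j3 j))
        ≤ 2 * (kf j + kb j) * ((∑ i, c i) + Q) := by
      intro j _
      set e : ℝ := ((if k = j3 j then 1 else 0)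
        - (if k = j1 j then 1 else 0) - (if k = j2 j then 1 else 0) : ℝ) with he
      have heb : e ≤ 1 ∧ -2 ≤ e := by
        rw [he]; split_ifs <;> norm_num
      have hP12 : (0:ℝ) ≤ c (j1 j) * c (j2 j) := mul_nonneg (hc _) (hc _)
      have hEA : e * (kf j * c (j1 j) * c (j2 j)) ≤ kf j * Q := by
        by_cases hk3 : k = j3 j
        · have hsub : ({j1 j, j2 j} : Finset (Fin P)) ⊆
              Finset.univ.filter (fun i : Fin P => (i : ℕ) < (k : ℕ)) := by
            intro i hi
            simp only [Finset.mem_insert, Finset.mem_singleton] at hi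
            simp only [Finset.mem_filter, Finset.mem_univ, true_and]
            rcases hi with h | h <;> subst h <;> rw [hk3]
            · exact (hsort j).1
            · exact (hsort j).2
          have h12 : c (j1 j) * c (j2 j) ≤ ∑ i ∈ ({j1 j, j2 j} : Finset (Fin P)), c i ^ 2 := by
            by_cases hne : j1 j = j2 j
            · rw [hne]
              simp [sq]
            · rw [Finset.sum_pair hne]
              nlinarith [sq_nonneg (c (j1 j) - c (j2 j)), hP12]
          have hQle : c (j1 j) * c (j2 j) ≤ Q := by
            refine h12.trans ?_
            exact Finset.sum_le_sum_of_subset_of_nonneg hsub fun i _ _ => sq_nonneg _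
          have h1 : e * (kf j * c (j1 j) * c (j2 j)) ≤ 1 * (kf j * c (j1 j) * c (j2 j)) :=
            mul_le_mul_of_nonneg_right heb.1 (mul_nonneg (mul_nonneg (hkf j) (hc _)) (hc _))
          have h2 : kf j * (c (j1 j) * c (j2 j)) ≤ kf j * Q :=
            mul_le_mul_of_nonneg_left hQle (hkf j)
          nlinarith
        · have he0 : e ≤ 0 := by
            rw [he, if_neg hk3]; split_ifs <;> norm_num
          have := mul_nonneg (by linarith : (0:ℝ) ≤ -e)
            (mul_nonneg (mul_nonneg (hkf j) (hc (j1 j))) (hc (j2 j)))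
          nlinarith [mul_nonneg (hkf j) hQ]
      have hB : (0:ℝ) ≤ kb j * c (j3 j) := mul_nonneg (hkb j) (hc _)
      have h4 : kb j * c (j3 j) ≤ kb j * ∑ i, c i :=
        mul_le_mul_of_nonneg_left (hc3 j) (hkb j)
      nlinarith [mul_nonneg (by linarith [heb.2] : (0:ℝ) ≤ e + 2) hB,
        mul_nonneg (hkf j) hS, mul_nonneg (hkb j) hQ, mul_nonneg (hkf j) hQ]
    calc (∑ j : Fin R, (((if k = j3 j then 1 else 0) - (if k = j1 j then 1 else 0)
              - (if k = j2 j then 1 else 0) : ℝ)) *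
            (kf j * c (j1 j) * c (j2 j) - kb j * c (j3 j)))
        ≤ ∑ j : Fin R, 2 * (kf j + kb j) * ((∑ i, c i) + Q) := Finset.sum_le_sum hterm
      _ = (∑ j : Fin R, 2 * (kf j + kb j)) * ((∑ i, c i) + Q) := by rw [Finset.sum_mul]
      _ ≤ C * ((∑ i, c i) + Q) := by
          apply mul_le_mul_of_nonneg_right _ (by linarith)
          simp only [hC]; linarith
end
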